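/- For the map φ taking a stochastic matrix f ∈ FinStoch(m, n) to the convex hull of its columns in D(n): φ(f) is invariant under precomposition with surjective stochastic maps (φ(f ∘ g) = φ(f) for g surjective stochastic m' → m), and φ(D(h) ∘ f) = CP(h)(φ(f)) for any function h : n → n', where CP(h) is the pointwise pushforward of probability vectors. -/

import Mathlib

/-- Stochastic matrix predicate: columns are probability vectors. -/
def Stoch' {m n : ℕ} (f : Fin n → Fin m → ℝ) : Prop :=
  (∀ a i, 0 ≤ f a i) ∧ ∀ i, ∑ a, f a i = 1

/-- A stochastic map is surjective if every Dirac distribution on the codomain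
appears among its columns. -/
def SurjStoch {m n : ℕ} (f : Fin n → Fin m → ℝ) : Prop :=
  ∀ j : Fin n, ∃ i : Fin m, (fun a => f a i) = fun a => if a = j then (1 : ℝ) else 0

/-- `φ(f)`, the convex hull of the columns of `f`, is invariant under
precomposition with surjective stochastic maps, and is natural with respect to
pushforward along functions of the outcome space. -/
theorem phi_natural {m n : ℕ} (f : Fin n → Fin m → ℝ) (hf : Stoch' f) :
    (∀ m' : ℕ, ∀ g : Fin m → Fin m' → ℝ, Stoch' g → SurjStoch g →
      convexHull ℝ (Set.range (fun i : Fin m' => fun a => ∑ b, f a b * g b i))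
        = convexHull ℝ (Set.range (fun i : Fin m => fun a => f a i)))
    ∧
    (∀ n' : ℕ, ∀ h : Fin n → Fin n',
      convexHull ℝ
          (Set.range (fun i : Fin m => fun a' => ∑ a, if h a = a' then f a i else 0))
        = (fun p : Fin n → ℝ => fun a' => ∑ a, if h a = a' then p a else 0) ''
            convexHull ℝ (Set.range (fun i : Fin m => fun a => f a i))) := by
  constructor
  · intro m' g hg hgs
    apply le_antisymm
    · apply convexHull_min ?_ (convex_convexHull ℝ _)
      rintro _ ⟨i, rfl⟩
      show (fun a => ∑ b, f a b * g b i) ∈ _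
      have : (fun a => ∑ b, f a b * g b i)
          = ∑ b, g b i • (fun a => f a b) := by
        funext a
        simp [Finset.sum_apply, mul_comm]
      rw [this]
      exact (convex_convexHull ℝ _).sum_mem (fun b _ => hg.1 b i) (hg.2 i)
        (fun b _ => subset_convexHull ℝ _ ⟨b, rfl⟩)
    · apply convexHull_mono
      rintro _ ⟨j, rfl⟩
      obtain ⟨i, hi⟩ := hgs j
      refine ⟨i, ?_⟩
      funext a
      have : ∀ b, g b i = if b = j then (1:ℝ) else 0 := fun b => congrFun hi b
      simp [this]
  · intro n' h
    let L : (Fin n → ℝ) →ₗ[ℝ] (Fin n' → ℝ) :=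
      { toFun := fun p a' => ∑ a, if h a = a' then p a else 0
        map_add' := by
          intro p q; funext a'
          simp [Finset.sum_add_distrib, ite_add_zero]
        map_smul' := by
          intro c p; funext a'
          simp [Finset.mul_sum, mul_ite] }
    have := L.image_convexHull (Set.range (fun i : Fin m => fun a => f a i))
    rw [show ((fun p : Fin n → ℝ => fun a' => ∑ a, if h a = a' then p a else 0) ''
        convexHull ℝ (Set.range fun i : Fin m => fun a => f a i)) = L '' _ from rfl, this,
      ← Set.range_comp]
    rfl
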